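/- arXiv:1503.04008 — 5 statements merged into one kernel-verified Lean document; each statement's English description precedes it below -/
import Mathlib

section
/- Let A, B, C be Young functions (convex, increasing, onto [0,∞), vanishing at 0) such that B^{-1}(t)·C^{-1}(t) ≤ κ·A^{-1}(t) for all t > 0. Then for all y, z ≥ 0, A(yz/κ) ≤ B(y) + C(z). -/
open Set

/-- If `A, B, C` are Young functions (convex, increasing, onto `[0,∞)`, vanishing
at `0`) with `B⁻¹(t)·C⁻¹(t) ≤ κ·A⁻¹(t)` for all `t > 0`, then
`A(yz/κ) ≤ B(y) + C(z)` for all `y, z ≥ 0`. -/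
theorem young_triple_direct (A B C Ainv Binv Cinv : ℝ → ℝ) (κ : ℝ) (hκ : 0 < κ)
    (hAconv : ConvexOn ℝ (Ici (0:ℝ)) A)
    (hBconv : ConvexOn ℝ (Ici (0:ℝ)) B)
    (hCconv : ConvexOn ℝ (Ici (0:ℝ)) C)
    (hA : StrictMonoOn A (Ici (0:ℝ))) (hA0 : A 0 = 0)
    (hB : StrictMonoOn B (Ici (0:ℝ))) (hB0 : B 0 = 0)
    (hC : StrictMonoOn C (Ici (0:ℝ))) (hC0 : C 0 = 0)
    (hAsurj : Set.SurjOn A (Ici (0:ℝ)) (Ici (0:ℝ)))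
    (hBsurj : Set.SurjOn B (Ici (0:ℝ)) (Ici (0:ℝ)))
    (hCsurj : Set.SurjOn C (Ici (0:ℝ)) (Ici (0:ℝ)))
    (hAinv : ∀ t > (0:ℝ), 0 ≤ Ainv t ∧ A (Ainv t) = t)
    (hBinv : ∀ t > (0:ℝ), 0 ≤ Binv t ∧ B (Binv t) = t)
    (hCinv : ∀ t > (0:ℝ), 0 ≤ Cinv t ∧ C (Cinv t) = t)
    (hprod : ∀ t > (0:ℝ), Binv t * Cinv t ≤ κ * Ainv t) :
    ∀ y z : ℝ, 0 ≤ y → 0 ≤ z → A (y * z / κ) ≤ B y + C z := by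
  intro y z hy hz
  have hBy : 0 ≤ B y := by
    rw [← hB0]; exact (hB.monotoneOn) (le_refl (0:ℝ)) hy hy
  have hCz : 0 ≤ C z := by
    rw [← hC0]; exact (hC.monotoneOn) (le_refl (0:ℝ)) hz hz
  rcases eq_or_lt_of_le hy with hy0 | hy0
  · simp [← hy0, hA0]; positivity
  rcases eq_or_lt_of_le hz with hz0 | hz0
  · simp [← hz0, hA0]; positivity
  set t := B y + C z with ht
  have hBy' : 0 < B y := by rw [← hB0]; exact hB (le_refl (0:ℝ)) hy hy0
  have hCz' : 0 < C z := by rw [← hC0]; exact hC (le_refl (0:ℝ)) hz hz0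
  have htpos : 0 < t := by positivity
  obtain ⟨hBinv0, hBinvt⟩ := hBinv t htpos
  obtain ⟨hCinv0, hCinvt⟩ := hCinv t htpos
  obtain ⟨hAinv0, hAinvt⟩ := hAinv t htpos
  have hyB : y ≤ Binv t := by
    have : B y ≤ B (Binv t) := by rw [hBinvt]; linarith
    exact (hB.le_iff_le hy hBinv0).mp this
  have hzC : z ≤ Cinv t := by
    have : C z ≤ C (Cinv t) := by rw [hCinvt]; linarith
    exact (hC.le_iff_le hz hCinv0).mp this
  have hyz : y * z ≤ κ * Ainv t :=
    le_trans (mul_le_mul hyB hzC hz hBinv0) (hprod t htpos)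
  have h1 : y * z / κ ≤ Ainv t := by
    rw [div_le_iff₀ hκ]; linarith [hyz]
  have h0 : 0 ≤ y * z / κ := by positivity
  have := (hA.monotoneOn) h0 hAinv0 h1
  rw [hAinvt] at this
  exact this
end

section
/- Let B be a Young function with inverse B^{-1} and complementary function B̄ such that t ≤ B^{-1}(t)·B̄^{-1}(t) ≤ 2t for t > 0, and let 1 < p < ∞. Then ∫_{B^{-1}(a)}^∞ dB(t)/t^p ≤ ∫_{B̄^{-1}(a)}^∞ (t/B̄(t))^p dB̄(t) for every a > 0. -/
open Set MeasureTheory ENNReal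

/-- Pushforward identity: the Stieltjes measure of `F` restricted to `Ioi (Finv a)` is the
image of Lebesgue measure on `Ioi a` under (a monotone modification of) the inverse `Finv`. -/
lemma stieltjes_map_inv (F : StieltjesFunction ℝ) (Finv : ℝ → ℝ) (a : ℝ) (ha : 0 < a)
    (hinv : ∀ t > (0:ℝ), 0 < Finv t ∧ F (Finv t) = t) :
    Measure.map (fun w => Finv (max w a)) (volume.restrict (Ioi a))
      = F.measure.restrict (Ioi (Finv a)) := by
  have hFeq : ∀ t > (0:ℝ), F (Finv t) = t := fun t ht => (hinv t ht).2
  have hlt : ∀ w1 w2 : ℝ, 0 < w1 → w1 < w2 → Finv w1 < Finv w2 := by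
    intro w1 w2 h1 h12
    by_contra h
    push_neg at h
    have h2 := F.mono h
    rw [hFeq w1 h1, hFeq w2 (h1.trans h12)] at h2
    exact absurd h2 (not_le.mpr h12)
  have hG : Monotone (fun w => Finv (max w a)) := by
    intro w1 w2 h
    have hm : max w1 a ≤ max w2 a := max_le_max h le_rfl
    rcases hm.eq_or_lt with he | hl
    · simp only [he, le_refl]
    · exact (hlt _ _ (lt_of_lt_of_le ha (le_max_right _ _)) hl).le
  have hGmeas : Measurable (fun w => Finv (max w a)) := hG.measurable
  set x := Finv a with hx
  have key : ∀ c d : ℝ,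
      Measure.map (fun w => Finv (max w a)) (volume.restrict (Ioi a)) (Ioc c d)
        = ENNReal.ofReal (F d - F (max c x)) := by
    intro c d
    rw [Measure.map_apply hGmeas measurableSet_Ioc,
      Measure.restrict_apply (hGmeas measurableSet_Ioc)]
    set c' := max c x with hc'
    have hxc' : x ≤ c' := le_max_right _ _
    have haFc' : a ≤ F c' := by
      have := F.mono hxc'
      rwa [hx, hFeq a ha] at this
    have hsub1 : (fun w => Finv (max w a)) ⁻¹' (Ioc c d) ∩ Ioi a
        ⊆ Ioc (F c') (F d) ∪ {F c'} := by
      rintro w ⟨hw, hwa⟩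
      simp only [mem_preimage, mem_Ioc, mem_Ioi] at hw hwa
      rw [max_eq_left hwa.le] at hw
      have hw0 : (0:ℝ) < w := ha.trans hwa
      have hFw : F (Finv w) = w := hFeq w hw0
      have hxlt : x < Finv w := hlt a w ha hwa
      have hc'lt : c' < Finv w := max_lt hw.1 hxlt
      have h1 : F c' ≤ w := by
        have := F.mono hc'lt.le
        rwa [hFw] at this
      have h2 : w ≤ F d := by
        have := F.mono hw.2
        rwa [hFw] at this
      rcases h1.eq_or_lt with he | hl
      · exact Or.inr (by simp [← he])
      · exact Or.inl ⟨hl, h2⟩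
    have hsub2 : Ioc (F c') (F d)
        ⊆ ((fun w => Finv (max w a)) ⁻¹' (Ioc c d) ∩ Ioi a) ∪ {F d} := by
      rintro w ⟨hw1, hw2⟩
      rcases hw2.eq_or_lt with he | hl
      · exact Or.inr (by simp [he])
      · have hwa : a < w := lt_of_le_of_lt haFc' hw1
        have hw0 : (0:ℝ) < w := ha.trans hwa
        have hFw : F (Finv w) = w := hFeq w hw0
        refine Or.inl ⟨?_, hwa⟩
        simp only [mem_preimage, mem_Ioc, max_eq_left hwa.le]
        constructor
        · have hc'lt : c' < Finv w := by
            by_contra h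
            push_neg at h
            have := F.mono h
            rw [hFw] at this
            exact absurd hw1 (not_lt.mpr this)
          exact lt_of_le_of_lt (le_max_left c x) hc'lt
        · by_contra h
          push_neg at h
          have := F.mono h.le
          rw [hFw] at this
          exact absurd this (not_le.mpr hl)
    have hv1 : volume ((fun w => Finv (max w a)) ⁻¹' (Ioc c d) ∩ Ioi a)
        ≤ volume (Ioc (F c') (F d)) := by
      calc volume ((fun w => Finv (max w a)) ⁻¹' (Ioc c d) ∩ Ioi a)
          ≤ volume (Ioc (F c') (F d) ∪ {F c'}) := measure_mono hsub1
        _ ≤ volume (Ioc (F c') (F d)) + volume {F c'} := measure_union_le _ _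
        _ = volume (Ioc (F c') (F d)) := by simp
    have hv2 : volume (Ioc (F c') (F d))
        ≤ volume ((fun w => Finv (max w a)) ⁻¹' (Ioc c d) ∩ Ioi a) := by
      calc volume (Ioc (F c') (F d))
          ≤ volume (((fun w => Finv (max w a)) ⁻¹' (Ioc c d) ∩ Ioi a) ∪ {F d}) :=
            measure_mono hsub2
        _ ≤ volume ((fun w => Finv (max w a)) ⁻¹' (Ioc c d) ∩ Ioi a) + volume {F d} :=
            measure_union_le _ _
        _ = volume ((fun w => Finv (max w a)) ⁻¹' (Ioc c d) ∩ Ioi a) := by simp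
    rw [le_antisymm hv1 hv2, Real.volume_Ioc]
  refine Measure.ext_of_Ioc' _ _ (fun c d _ => ?_) (fun c d _ => ?_)
  · rw [key c d]; exact ENNReal.ofReal_ne_top
  · rw [key c d, Measure.restrict_apply measurableSet_Ioc]
    have hset : Ioc c d ∩ Ioi x = Ioc (max c x) d := by
      ext w
      simp only [mem_inter_iff, mem_Ioc, mem_Ioi, max_lt_iff]
      tauto
    rw [hset, F.measure_Ioc]

/-- Key change-of-variable estimate between a Young function `B` and its complementary
function `B̄`: for every `a > 0` and `1 < p < ∞`,
`∫_{B⁻¹(a)}^∞ dB(t)/t^p ≤ ∫_{B̄⁻¹(a)}^∞ (t/B̄(t))^p dB̄(t)`. -/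
theorem stieltjes_tail_estimate (B Bbar : StieltjesFunction ℝ)
    (Binv Bbarinv : ℝ → ℝ) (p : ℝ) (hp : 1 < p)
    (hBconv : ConvexOn ℝ (Ici (0:ℝ)) B)
    (hB0 : B 0 = 0)
    (hBbarcompl : ∀ s ≥ (0:ℝ),
      IsLUB {x : ℝ | ∃ t : ℝ, 0 < t ∧ x = s * t - B t} (Bbar s))
    (hBbarquot : MonotoneOn (fun t : ℝ => Bbar t / t) (Ioi (0:ℝ)))
    (hBinv : ∀ t > (0:ℝ), 0 < Binv t ∧ B (Binv t) = t)
    (hBbarinv : ∀ t > (0:ℝ), 0 < Bbarinv t ∧ Bbar (Bbarinv t) = t)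
    (hinvprod : ∀ t > (0:ℝ), t ≤ Binv t * Bbarinv t ∧ Binv t * Bbarinv t ≤ 2 * t)
    (a : ℝ) (ha : 0 < a) :
    (∫⁻ t in Ioi (Binv a), ENNReal.ofReal (1 / t ^ p) ∂B.measure) ≤
      ∫⁻ t in Ioi (Bbarinv a), ENNReal.ofReal ((t / Bbar t) ^ p) ∂Bbar.measure := by
  have hmapB := stieltjes_map_inv B Binv a ha hBinv
  have hmapBbar := stieltjes_map_inv Bbar Bbarinv a ha hBbarinv
  have hf : Measurable (fun t : ℝ => ENNReal.ofReal (1 / t ^ p)) := by fun_prop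
  have hBbarmeas : Measurable (fun t : ℝ => Bbar t) := Bbar.mono.measurable
  have hg : Measurable (fun t : ℝ => ENNReal.ofReal ((t / Bbar t) ^ p)) := by fun_prop
  have hGB : Measurable (fun w => Binv (max w a)) := by
    have := stieltjes_map_inv B Binv a ha hBinv
    -- re-derive monotonicity
    have hlt : ∀ w1 w2 : ℝ, 0 < w1 → w1 < w2 → Binv w1 < Binv w2 := by
      intro w1 w2 h1 h12
      by_contra h
      push_neg at h
      have h2 := B.mono h
      rw [(hBinv w1 h1).2, (hBinv w2 (h1.trans h12)).2] at h2
      exact absurd h2 (not_le.mpr h12)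
    refine Monotone.measurable ?_
    intro w1 w2 h
    rcases (max_le_max h (le_refl a)).eq_or_lt with he | hl
    · simp only [he, le_refl]
    · exact (hlt _ _ (lt_of_lt_of_le ha (le_max_right _ _)) hl).le
  have hGBbar : Measurable (fun w => Bbarinv (max w a)) := by
    have hlt : ∀ w1 w2 : ℝ, 0 < w1 → w1 < w2 → Bbarinv w1 < Bbarinv w2 := by
      intro w1 w2 h1 h12
      by_contra h
      push_neg at h
      have h2 := Bbar.mono h
      rw [(hBbarinv w1 h1).2, (hBbarinv w2 (h1.trans h12)).2] at h2
      exact absurd h2 (not_le.mpr h12)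
    refine Monotone.measurable ?_
    intro w1 w2 h
    rcases (max_le_max h (le_refl a)).eq_or_lt with he | hl
    · simp only [he, le_refl]
    · exact (hlt _ _ (lt_of_lt_of_le ha (le_max_right _ _)) hl).le
  calc (∫⁻ t in Ioi (Binv a), ENNReal.ofReal (1 / t ^ p) ∂B.measure)
      = ∫⁻ w in Ioi a, ENNReal.ofReal (1 / (Binv (max w a)) ^ p) := by
        rw [← hmapB, lintegral_map hf hGB]
    _ = ∫⁻ w in Ioi a, ENNReal.ofReal (1 / (Binv w) ^ p) := by
        refine setLIntegral_congr_fun measurableSet_Ioi (fun w hw => ?_)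
        beta_reduce
        rw [max_eq_left (le_of_lt hw)]
    _ ≤ ∫⁻ w in Ioi a, ENNReal.ofReal ((Bbarinv (max w a) / w) ^ p) := by
        have hp0 : (0:ℝ) ≤ p := le_of_lt (lt_trans one_pos hp)
        have hgmid : Measurable (fun w : ℝ => ENNReal.ofReal ((Bbarinv (max w a) / w) ^ p)) :=
          ((Real.continuous_rpow_const hp0).measurable.comp
            (hGBbar.div measurable_id)).ennreal_ofReal
        refine setLIntegral_mono hgmid (fun w hw => ?_)
        · rw [max_eq_left (le_of_lt hw)]
          have hw0 : (0:ℝ) < w := ha.trans hw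
          obtain ⟨hBip, _⟩ := hBinv w hw0
          obtain ⟨hBbip, _⟩ := hBbarinv w hw0
          obtain ⟨hlow, _⟩ := hinvprod w hw0
          apply ENNReal.ofReal_le_ofReal
          rw [one_div, ← Real.inv_rpow hBip.le]
          refine Real.rpow_le_rpow (inv_nonneg.mpr hBip.le) ?_
            (le_of_lt (lt_trans one_pos hp))
          rw [inv_eq_one_div, div_le_div_iff₀ hBip hw0]
          nlinarith
    _ = ∫⁻ w in Ioi a, ENNReal.ofReal
          ((Bbarinv (max w a) / Bbar (Bbarinv (max w a))) ^ p) := by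
        refine setLIntegral_congr_fun measurableSet_Ioi (fun w hw => ?_)
        beta_reduce
        rw [max_eq_left (le_of_lt hw), (hBbarinv w (ha.trans hw)).2]
    _ = ∫⁻ t in Ioi (Bbarinv a), ENNReal.ofReal ((t / Bbar t) ^ p) ∂Bbar.measure := by
        rw [← hmapBbar, lintegral_map hg hGBbar]
end

section
/- If w₁ and w₂ are A₁ weights on ℝⁿ and 1 < p < ∞, then w = w₁·w₂^{1−p} is an A_p weight with [w]_{A_p} ≤ [w₁]_{A₁}·[w₂]_{A₁}^{p−1}. -/
open Set MeasureTheory ENNReal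

/-- A cube in `ℝⁿ` with lower-left corner `a` and side length `r`. -/
def cube {n : ℕ} (a : Fin n → ℝ) (r : ℝ) : Set (Fin n → ℝ) :=
  {x | ∀ i, a i ≤ x i ∧ x i ≤ a i + r}

/-- Average of an `ℝ≥0∞`-valued weight over a set. -/
noncomputable def cubeAvg {n : ℕ} (Q : Set (Fin n → ℝ)) (w : (Fin n → ℝ) → ℝ≥0∞) : ℝ≥0∞ :=
  (∫⁻ x in Q, w x) / volume Q

private lemma erpow_anti {x y : ℝ≥0∞} {z : ℝ} (h : x ≤ y) (hz : z ≤ 0) : y ^ z ≤ x ^ z := by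
  rw [← neg_neg z, ENNReal.rpow_neg y, ENNReal.rpow_neg x, ENNReal.inv_le_inv]
  exact ENNReal.rpow_le_rpow h (neg_nonneg.mpr hz)

private lemma cube_volume {n : ℕ} (a : Fin n → ℝ) (r : ℝ) :
    volume (cube a r) = (ENNReal.ofReal r) ^ n := by
  have : cube a r = Set.pi univ (fun i => Icc (a i) (a i + r)) := by
    ext x; simp [cube, Set.mem_pi, mem_Icc, Pi.le_def, forall_and]
  rw [this, volume_pi_pi]
  simp [Real.volume_Icc]

/-- Easy half of the factorization theorem: if `w₁, w₂ ∈ A₁`, then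
`w = w₁ · w₂^{1-p} ∈ A_p` with `[w]_{A_p} ≤ [w₁]_{A₁} [w₂]_{A₁}^{p-1}`. -/
theorem a1_factorization {n : ℕ} (p : ℝ) (hp : 1 < p)
    (w₁ w₂ : (Fin n → ℝ) → ℝ≥0∞) (hw₁ : Measurable w₁) (hw₂ : Measurable w₂)
    (c₁ c₂ : ℝ≥0∞)
    -- `[w₁]_{A₁} ≤ c₁` : on each cube, the average of `w₁` is a.e. bounded by `c₁ w₁`
    (h₁ : ∀ (a : Fin n → ℝ) (r : ℝ), 0 < r →
      ∀ᵐ x ∂(volume.restrict (cube a r)), cubeAvg (cube a r) w₁ ≤ c₁ * w₁ x)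
    (h₂ : ∀ (a : Fin n → ℝ) (r : ℝ), 0 < r →
      ∀ᵐ x ∂(volume.restrict (cube a r)), cubeAvg (cube a r) w₂ ≤ c₂ * w₂ x) :
    ∀ (a : Fin n → ℝ) (r : ℝ), 0 < r →
      cubeAvg (cube a r) (fun x => w₁ x * w₂ x ^ (1 - p)) *
        (cubeAvg (cube a r) (fun x => (w₁ x * w₂ x ^ (1 - p)) ^ (1 / (1 - p)))) ^ (p - 1)
      ≤ c₁ * c₂ ^ (p - 1) := by
  intro a r hr
  set Q : Set (Fin n → ℝ) := cube a r with hQdef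
  set μ : Measure (Fin n → ℝ) := volume.restrict Q with hμdef
  -- basic facts about the volume of the cube
  have hμ0 : volume Q ≠ 0 := by
    rw [hQdef, cube_volume]
    exact pow_ne_zero _ (ENNReal.ofReal_pos.mpr hr).ne'
  have hμt : volume Q ≠ ⊤ := by
    rw [hQdef, cube_volume]
    exact ENNReal.pow_ne_top ENNReal.ofReal_ne_top
  -- exponent facts
  have h1p : 1 - p < 0 := by linarith
  have hq : 1 / (1 - p) < 0 := div_neg_of_pos_of_neg one_pos h1p
  have hpm : 0 < p - 1 := by linarith
  have hne1p : (1 : ℝ) - p ≠ 0 := by linarith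
  have hmul1 : (1 - p) * (1 / (1 - p)) = 1 := by
    rw [mul_one_div, div_self hne1p]
  have hmul2 : (1 / (1 - p)) * (p - 1) = -1 := by
    rw [div_mul_eq_mul_div, one_mul, ← neg_sub 1 p, neg_div, div_self hne1p]
  have h₁' := h₁ a r hr
  have h₂' := h₂ a r hr
  set A₁ : ℝ≥0∞ := cubeAvg Q w₁ with hA₁def
  set A₂ : ℝ≥0∞ := cubeAvg Q w₂ with hA₂def
  by_cases hI₁ : (∫⁻ x in Q, w₁ x) = 0
  · -- w₁ = 0 a.e. on Q, so the first average vanishes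
    have hz : w₁ =ᵐ[μ] 0 := (lintegral_eq_zero_iff hw₁).mp hI₁
    have : (∫⁻ x in Q, w₁ x * w₂ x ^ (1 - p)) = 0 := by
      rw [lintegral_eq_zero_iff (show Measurable (fun x => w₁ x * w₂ x ^ (1 - p)) from hw₁.mul (hw₂.pow_const _))]
      filter_upwards [hz] with x hx
      simp [hx]
    rw [show cubeAvg Q (fun x => w₁ x * w₂ x ^ (1 - p)) = 0 by
      rw [cubeAvg, this, ENNReal.zero_div], zero_mul]
    exact zero_le
  by_cases hI₂ : (∫⁻ x in Q, w₂ x) = 0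
  · -- w₂ = 0 a.e. on Q, but w₁ > 0 a.e., so the second average vanishes
    have hz : w₂ =ᵐ[μ] 0 := (lintegral_eq_zero_iff hw₂).mp hI₂
    have hA₁0 : A₁ ≠ 0 := by
      rw [hA₁def, cubeAvg]
      simp [ENNReal.div_eq_zero_iff, hI₁, hμt]
    have hpos : ∀ᵐ x ∂μ, w₁ x ≠ 0 := by
      filter_upwards [h₁'] with x hx h0
      rw [h0, mul_zero] at hx
      exact hA₁0 (le_antisymm hx (zero_le))
    have : (∫⁻ x in Q, (w₁ x * w₂ x ^ (1 - p)) ^ (1 / (1 - p))) = 0 := by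
      rw [lintegral_eq_zero_iff (show Measurable (fun x => (w₁ x * w₂ x ^ (1 - p)) ^ (1 / (1 - p))) from (hw₁.mul (hw₂.pow_const _)).pow_const _)]
      filter_upwards [hz, hpos] with x hx hx1
      simp only [Pi.zero_apply, hx]
      rw [ENNReal.zero_rpow_of_neg h1p, ENNReal.mul_top hx1,
        ENNReal.top_rpow_of_neg hq]
    rw [show cubeAvg Q (fun x => (w₁ x * w₂ x ^ (1 - p)) ^ (1 / (1 - p))) = 0 by
      rw [cubeAvg, this, ENNReal.zero_div], ENNReal.zero_rpow_of_pos hpm, mul_zero]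
    exact zero_le
  -- now both integrals are nonzero
  have hA₁0 : A₁ ≠ 0 := by
    rw [hA₁def, cubeAvg]; simp [ENNReal.div_eq_zero_iff, hI₁, hμt]
  have hA₂0 : A₂ ≠ 0 := by
    rw [hA₂def, cubeAvg]; simp [ENNReal.div_eq_zero_iff, hI₂, hμt]
  have hμne : μ ≠ 0 := by
    rw [hμdef, Ne, Measure.restrict_eq_zero]; exact hμ0
  haveI : Filter.NeBot (ae μ) := ae_neBot.mpr hμne
  have hc₁0 : c₁ ≠ 0 := by
    obtain ⟨x, hx⟩ := h₁'.exists
    intro h0; rw [h0, zero_mul] at hx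
    exact hA₁0 (le_antisymm hx (zero_le))
  have hc₂0 : c₂ ≠ 0 := by
    obtain ⟨x, hx⟩ := h₂'.exists
    intro h0; rw [h0, zero_mul] at hx
    exact hA₂0 (le_antisymm hx (zero_le))
  by_cases hc₁t : c₁ = ⊤
  · rw [hc₁t, ENNReal.top_mul (by
      rw [Ne, ENNReal.rpow_eq_zero_iff]
      rintro (⟨h, -⟩ | ⟨-, h⟩)
      exacts [hc₂0 h, absurd hpm (not_lt.mpr h.le)])]
    exact le_top
  by_cases hc₂t : c₂ = ⊤
  · rw [hc₂t, ENNReal.top_rpow_of_pos hpm, ENNReal.mul_top hc₁0]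
    exact le_top
  -- a.e. positivity
  have hpos₁ : ∀ᵐ x ∂μ, w₁ x ≠ 0 := by
    filter_upwards [h₁'] with x hx h0
    rw [h0, mul_zero] at hx
    exact hA₁0 (le_antisymm hx (zero_le))
  have hpos₂ : ∀ᵐ x ∂μ, w₂ x ≠ 0 := by
    filter_upwards [h₂'] with x hx h0
    rw [h0, mul_zero] at hx
    exact hA₂0 (le_antisymm hx (zero_le))
  by_cases hI₁t : (∫⁻ x in Q, w₁ x) = ⊤
  · -- w₁ = ⊤ a.e.
    have hA₁t : A₁ = ⊤ := by
      rw [hA₁def, cubeAvg, hI₁t]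
      exact ENNReal.top_div_of_lt_top (lt_top_iff_ne_top.mpr hμt) |>.symm ▸ rfl
    have htop₁ : ∀ᵐ x ∂μ, w₁ x = ⊤ := by
      filter_upwards [h₁'] with x hx
      rw [hA₁t] at hx
      by_contra h
      exact (ENNReal.mul_lt_top (lt_top_iff_ne_top.mpr hc₁t) (lt_top_iff_ne_top.mpr h)).ne
        (top_le_iff.mp hx)
    by_cases hI₂t : (∫⁻ x in Q, w₂ x) = ⊤
    · -- also w₂ = ⊤ a.e., so w = ⊤ * 0 = 0 a.e.
      have hA₂t : A₂ = ⊤ := by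
        rw [hA₂def, cubeAvg, hI₂t]
        exact ENNReal.top_div_of_lt_top (lt_top_iff_ne_top.mpr hμt) |>.symm ▸ rfl
      have htop₂ : ∀ᵐ x ∂μ, w₂ x = ⊤ := by
        filter_upwards [h₂'] with x hx
        rw [hA₂t] at hx
        by_contra h
        exact (ENNReal.mul_lt_top (lt_top_iff_ne_top.mpr hc₂t) (lt_top_iff_ne_top.mpr h)).ne
          (top_le_iff.mp hx)
      have : (∫⁻ x in Q, w₁ x * w₂ x ^ (1 - p)) = 0 := by
        rw [lintegral_eq_zero_iff (show Measurable (fun x => w₁ x * w₂ x ^ (1 - p)) from hw₁.mul (hw₂.pow_const _))]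
        filter_upwards [htop₂] with x hx
        simp [hx, ENNReal.top_rpow_of_neg h1p]
      rw [show cubeAvg Q (fun x => w₁ x * w₂ x ^ (1 - p)) = 0 by
        rw [cubeAvg, this, ENNReal.zero_div], zero_mul]
      exact zero_le
    · -- w₂ finite a.e., so w = ⊤ a.e. and w^q = 0 a.e.
      have hfin₂ : ∀ᵐ x ∂μ, w₂ x < ⊤ := ae_lt_top hw₂ hI₂t
      have : (∫⁻ x in Q, (w₁ x * w₂ x ^ (1 - p)) ^ (1 / (1 - p))) = 0 := by
        rw [lintegral_eq_zero_iff (show Measurable (fun x => (w₁ x * w₂ x ^ (1 - p)) ^ (1 / (1 - p))) from (hw₁.mul (hw₂.pow_const _)).pow_const _)]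
        filter_upwards [htop₁, hpos₂, hfin₂] with x hx hx0 hxt
        have hne : w₂ x ^ (1 - p) ≠ 0 := by
          rw [Ne, ENNReal.rpow_eq_zero_iff]
          rintro (⟨h, -⟩ | ⟨h, -⟩)
          exacts [hx0 h, hxt.ne h]
        simp only [Pi.zero_apply, hx]
        rw [ENNReal.top_mul hne, ENNReal.top_rpow_of_neg hq]
      rw [show cubeAvg Q (fun x => (w₁ x * w₂ x ^ (1 - p)) ^ (1 / (1 - p))) = 0 by
        rw [cubeAvg, this, ENNReal.zero_div], ENNReal.zero_rpow_of_pos hpm, mul_zero]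
      exact zero_le
  by_cases hI₂t : (∫⁻ x in Q, w₂ x) = ⊤
  · -- w₂ = ⊤ a.e., w₁ finite a.e., so w = w₁ * 0 = 0 a.e.
    have hA₂t : A₂ = ⊤ := by
      rw [hA₂def, cubeAvg, hI₂t]
      exact ENNReal.top_div_of_lt_top (lt_top_iff_ne_top.mpr hμt) |>.symm ▸ rfl
    have htop₂ : ∀ᵐ x ∂μ, w₂ x = ⊤ := by
      filter_upwards [h₂'] with x hx
      rw [hA₂t] at hx
      by_contra h
      exact (ENNReal.mul_lt_top (lt_top_iff_ne_top.mpr hc₂t) (lt_top_iff_ne_top.mpr h)).ne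
        (top_le_iff.mp hx)
    have : (∫⁻ x in Q, w₁ x * w₂ x ^ (1 - p)) = 0 := by
      rw [lintegral_eq_zero_iff (show Measurable (fun x => w₁ x * w₂ x ^ (1 - p)) from hw₁.mul (hw₂.pow_const _))]
      filter_upwards [htop₂] with x hx
      simp [hx, ENNReal.top_rpow_of_neg h1p]
    rw [show cubeAvg Q (fun x => w₁ x * w₂ x ^ (1 - p)) = 0 by
      rw [cubeAvg, this, ENNReal.zero_div], zero_mul]
    exact zero_le
  -- MAIN CASE: everything positive and finite
  have hA₁t : A₁ ≠ ⊤ := (ENNReal.div_lt_top hI₁t hμ0).ne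
  have hA₂t : A₂ ≠ ⊤ := (ENNReal.div_lt_top hI₂t hμ0).ne
  have hfin₁ : ∀ᵐ x ∂μ, w₁ x < ⊤ := ae_lt_top hw₁ hI₁t
  have hfin₂ : ∀ᵐ x ∂μ, w₂ x < ⊤ := ae_lt_top hw₂ hI₂t
  set B₁ : ℝ≥0∞ := A₁ / c₁ with hB₁def
  set B₂ : ℝ≥0∞ := A₂ / c₂ with hB₂def
  have hB₁0 : B₁ ≠ 0 := by
    rw [hB₁def]; simp [ENNReal.div_eq_zero_iff, hA₁0, hc₁t]
  have hB₂0 : B₂ ≠ 0 := by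
    rw [hB₂def]; simp [ENNReal.div_eq_zero_iff, hA₂0, hc₂t]
  have hB₁t : B₁ ≠ ⊤ := (ENNReal.div_lt_top hA₁t hc₁0).ne
  have hB₂t : B₂ ≠ ⊤ := (ENNReal.div_lt_top hA₂t hc₂0).ne
  have hle₁ : ∀ᵐ x ∂μ, B₁ ≤ w₁ x := by
    filter_upwards [h₁'] with x hx
    exact ENNReal.div_le_of_le_mul (by rwa [mul_comm] at hx)
  have hle₂ : ∀ᵐ x ∂μ, B₂ ≤ w₂ x := by
    filter_upwards [h₂'] with x hx
    exact ENNReal.div_le_of_le_mul (by rwa [mul_comm] at hx)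
  -- bound on the first average
  have key₁ : cubeAvg Q (fun x => w₁ x * w₂ x ^ (1 - p)) ≤ A₁ * B₂ ^ (1 - p) := by
    have : (∫⁻ x in Q, w₁ x * w₂ x ^ (1 - p)) ≤ (∫⁻ x in Q, w₁ x) * B₂ ^ (1 - p) := by
      rw [← lintegral_mul_const _ hw₁]
      refine lintegral_mono_ae ?_
      filter_upwards [hle₂] with x hx
      exact mul_le_mul_right (erpow_anti hx h1p.le) _
    calc cubeAvg Q (fun x => w₁ x * w₂ x ^ (1 - p))
        ≤ ((∫⁻ x in Q, w₁ x) * B₂ ^ (1 - p)) / volume Q :=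
          ENNReal.div_le_div_right this _
      _ = A₁ * B₂ ^ (1 - p) := by
          rw [hA₁def, cubeAvg, ENNReal.div_eq_inv_mul, ENNReal.div_eq_inv_mul]
          ring
  -- bound on the second average
  have key₂ : cubeAvg Q (fun x => (w₁ x * w₂ x ^ (1 - p)) ^ (1 / (1 - p)))
      ≤ B₁ ^ (1 / (1 - p)) * A₂ := by
    have : (∫⁻ x in Q, (w₁ x * w₂ x ^ (1 - p)) ^ (1 / (1 - p)))
        ≤ B₁ ^ (1 / (1 - p)) * (∫⁻ x in Q, w₂ x) := by
      rw [← lintegral_const_mul _ hw₂]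
      refine lintegral_mono_ae ?_
      filter_upwards [hle₁, hpos₂, hfin₁, hfin₂] with x hx hx2 hxt1 hxt2
      have hne : w₂ x ^ (1 - p) ≠ ⊤ := by
        rw [Ne, ENNReal.rpow_eq_top_iff]
        rintro (⟨h, -⟩ | ⟨h, -⟩)
        exacts [hx2 h, hxt2.ne h]
      rw [ENNReal.mul_rpow_of_ne_top hxt1.ne hne, ← ENNReal.rpow_mul, hmul1,
        ENNReal.rpow_one]
      exact mul_le_mul_left (erpow_anti hx hq.le) _
    calc cubeAvg Q (fun x => (w₁ x * w₂ x ^ (1 - p)) ^ (1 / (1 - p)))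
        ≤ (B₁ ^ (1 / (1 - p)) * (∫⁻ x in Q, w₂ x)) / volume Q :=
          ENNReal.div_le_div_right this _
      _ = B₁ ^ (1 / (1 - p)) * A₂ := by
          rw [hA₂def, cubeAvg, ENNReal.div_eq_inv_mul, ENNReal.div_eq_inv_mul]
          ring
  -- combine
  have hBq_t : B₁ ^ (1 / (1 - p)) ≠ ⊤ := by
    rw [Ne, ENNReal.rpow_eq_top_iff]
    rintro (⟨h, -⟩ | ⟨h, -⟩)
    exacts [hB₁0 h, hB₁t h]
  calc cubeAvg Q (fun x => w₁ x * w₂ x ^ (1 - p)) *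
        (cubeAvg Q (fun x => (w₁ x * w₂ x ^ (1 - p)) ^ (1 / (1 - p)))) ^ (p - 1)
      ≤ (A₁ * B₂ ^ (1 - p)) * (B₁ ^ (1 / (1 - p)) * A₂) ^ (p - 1) :=
        mul_le_mul' key₁ (ENNReal.rpow_le_rpow key₂ hpm.le)
    _ = (A₁ * B₂ ^ (1 - p)) * (B₁ ^ ((1 / (1 - p)) * (p - 1)) * A₂ ^ (p - 1)) := by
        rw [ENNReal.mul_rpow_of_ne_top hBq_t hA₂t, ← ENNReal.rpow_mul]
    _ = (A₁ * B₂ ^ (1 - p)) * (B₁⁻¹ * A₂ ^ (p - 1)) := by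
        rw [hmul2, ENNReal.rpow_neg, ENNReal.rpow_one]
    _ = c₁ * c₂ ^ (p - 1) := by
        rw [hB₁def, hB₂def, div_eq_mul_inv A₂ c₂,
          ENNReal.mul_rpow_of_ne_top hA₂t (ENNReal.inv_ne_top.mpr hc₂0),
          ENNReal.inv_rpow, ← ENNReal.rpow_neg, neg_sub,
          div_eq_mul_inv A₁ c₁,
          ENNReal.mul_inv (Or.inl hA₁0) (Or.inl hA₁t), inv_inv]
        calc A₁ * (A₂ ^ (1 - p) * c₂ ^ (p - 1)) * (A₁⁻¹ * c₁ * A₂ ^ (p - 1))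
            = (A₁ * A₁⁻¹) * (A₂ ^ (1 - p) * A₂ ^ (p - 1)) * (c₁ * c₂ ^ (p - 1)) := by
              ring
          _ = c₁ * c₂ ^ (p - 1) := by
              rw [ENNReal.mul_inv_cancel hA₁0 hA₁t,
                ← ENNReal.rpow_add _ _ hA₂0 hA₂t]
              norm_num
end

section
/- Let w be a weight on ℝⁿ and 𝒮 a sparse family of dyadic cubes. Then for every cube R in the dyadic grid, Σ_{Q∈𝒮, Q⊆R} w(Q) ≤ 2·[w]_{A_∞}·w(R), where [w]_{A_∞} = sup_Q (1/w(Q)) ∫_Q M(w·χ_Q) dx. -/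
open Set MeasureTheory ENNReal

/-- The (uncentered, over cubes) Hardy–Littlewood maximal function of a weight `w`. -/
noncomputable def maximalFn {n : ℕ} (w : (Fin n → ℝ) → ℝ≥0∞) (x : Fin n → ℝ) : ℝ≥0∞ :=
  ⨆ (a : Fin n → ℝ) (r : ℝ) (_ : 0 < r) (_ : x ∈ cube a r),
    (∫⁻ y in cube a r, w y) / volume (cube a r)

lemma cube_eq_pi {n : ℕ} (a : Fin n → ℝ) (r : ℝ) :
    cube a r = Set.univ.pi fun i => Icc (a i) (a i + r) := by
  ext x; simp [cube, Set.mem_pi, Set.mem_Icc, Pi.le_def, forall_and]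

lemma measurableSet_cube {n : ℕ} (a : Fin n → ℝ) (r : ℝ) : MeasurableSet (cube a r) := by
  rw [cube_eq_pi]; exact MeasurableSet.univ_pi fun i => measurableSet_Icc

lemma volume_cube {n : ℕ} (a : Fin n → ℝ) (r : ℝ) :
    volume (cube a r) = ENNReal.ofReal r ^ n := by
  rw [cube_eq_pi, volume_pi_pi]
  simp [Real.volume_Icc]

lemma volume_cube_pos {n : ℕ} (a : Fin n → ℝ) {r : ℝ} (hr : 0 < r) :
    0 < volume (cube a r) := by
  rw [volume_cube]
  exact ENNReal.pow_pos (ENNReal.ofReal_pos.mpr hr) n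

lemma volume_cube_ne_top {n : ℕ} (a : Fin n → ℝ) (r : ℝ) :
    volume (cube a r) ≠ ∞ := by
  rw [volume_cube]
  exact ENNReal.pow_ne_top ENNReal.ofReal_ne_top

/-- The Carleson property of a sparse family: if `𝒮 = {Q i}` is a sparse family of
cubes (each `Q i` contains a measurable `E i` with `|Q i| ≤ 2 |E i|`, the `E i`
pairwise disjoint), and `w` has Fujii–Wilson constant at most `cA`, then for every
cube `R`, `∑_{Q ∈ 𝒮, Q ⊆ R} w(Q) ≤ 2 cA w(R)`. -/
theorem sparse_carleson {n : ℕ} {ι : Type*} [Countable ι]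
    (w : (Fin n → ℝ) → ℝ≥0∞) (hw : Measurable w)
    -- the sparse family: cubes `cube (a i) (r i)` with sparseness witnesses `E i`
    (a : ι → Fin n → ℝ) (r : ι → ℝ) (hr : ∀ i, 0 < r i)
    (E : ι → Set (Fin n → ℝ)) (hEmeas : ∀ i, MeasurableSet (E i))
    (hEsub : ∀ i, E i ⊆ cube (a i) (r i))
    (hEsparse : ∀ i, volume (cube (a i) (r i)) ≤ 2 * volume (E i))
    (hEdisj : Pairwise (Function.onFun Disjoint E))
    -- `[w]_{A∞} ≤ cA` : the Fujii–Wilson condition on every cube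
    (cA : ℝ≥0∞)
    (hAinf : ∀ (b : Fin n → ℝ) (s : ℝ), 0 < s →
      (∫⁻ x in cube b s, maximalFn (fun y => (cube b s).indicator w y) x) ≤
        cA * ∫⁻ x in cube b s, w x)
    (b : Fin n → ℝ) (s : ℝ) (hs : 0 < s) :
    (∑' i : ι, {i : ι | cube (a i) (r i) ⊆ cube b s}.indicator
        (fun i => ∫⁻ x in cube (a i) (r i), w x) i)
      ≤ 2 * cA * ∫⁻ x in cube b s, w x := by
  classical
  set R : Set (Fin n → ℝ) := cube b s with hRdef
  set f : (Fin n → ℝ) → ℝ≥0∞ := maximalFn (fun y => R.indicator w y) with hfdef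
  set S : Set ι := {i : ι | cube (a i) (r i) ⊆ R} with hSdef
  -- key pointwise estimate
  have key : ∀ i ∈ S, (∫⁻ x in cube (a i) (r i), w x) ≤ 2 * ∫⁻ x in E i, f x := by
    intro i hi
    set wQ := ∫⁻ x in cube (a i) (r i), w x with hwQ
    set vQ := volume (cube (a i) (r i)) with hvQ
    have hvQpos : 0 < vQ := volume_cube_pos _ (hr i)
    have hvQne : vQ ≠ ∞ := volume_cube_ne_top _ _
    have hind : (∫⁻ y in cube (a i) (r i), R.indicator w y) = wQ := by
      refine setLIntegral_congr_fun (measurableSet_cube _ _) ?_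
      exact fun y hy => Set.indicator_of_mem (hi hy) w
    have hpt : ∀ x ∈ E i, wQ / vQ ≤ f x := by
      intro x hx
      have hxQ : x ∈ cube (a i) (r i) := hEsub i hx
      have : (∫⁻ y in cube (a i) (r i), R.indicator w y) / vQ ≤ f x := by
        rw [hfdef]
        unfold maximalFn
        exact le_iSup₂_of_le (a i) (r i) (le_iSup₂_of_le (hr i) hxQ le_rfl)
      rwa [hind] at this
    have h1 : wQ / vQ * volume (E i) ≤ ∫⁻ x in E i, f x := by
      calc wQ / vQ * volume (E i) = ∫⁻ _ in E i, wQ / vQ := (setLIntegral_const _ _).symm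
        _ ≤ ∫⁻ x in E i, f x := setLIntegral_mono' (hEmeas i) hpt
    calc wQ = wQ / vQ * vQ := (ENNReal.div_mul_cancel hvQpos.ne' hvQne).symm
      _ ≤ wQ / vQ * (2 * volume (E i)) := mul_le_mul_right (hEsparse i) _
      _ = 2 * (wQ / vQ * volume (E i)) := by ring
      _ ≤ 2 * ∫⁻ x in E i, f x := mul_le_mul_right h1 _
  have step1 : (∑' i : ι, S.indicator (fun i => ∫⁻ x in cube (a i) (r i), w x) i)
      ≤ ∑' i : ι, S.indicator (fun i => 2 * ∫⁻ x in E i, f x) i := by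
    refine ENNReal.tsum_le_tsum fun i => ?_
    by_cases hi : i ∈ S
    · simpa [Set.indicator_of_mem hi] using key i hi
    · simp [Set.indicator_of_notMem hi]
  have step2 : (∑' i : ι, S.indicator (fun i => 2 * ∫⁻ x in E i, f x) i)
      = 2 * ∑' i : ι, S.indicator (fun i => ∫⁻ x in E i, f x) i := by
    rw [← ENNReal.tsum_mul_left]
    congr 1
    ext i
    by_cases hi : i ∈ S
    · simp [Set.indicator_of_mem hi]
    · simp [Set.indicator_of_notMem hi]
  have step3 : (∑' i : ι, S.indicator (fun i => ∫⁻ x in E i, f x) i)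
      ≤ ∫⁻ x in R, f x := by
    rw [← tsum_subtype S (fun i => ∫⁻ x in E i, f x)]
    have hdisj : Pairwise (Function.onFun Disjoint fun i : S => E i) := by
      intro i j hij
      exact hEdisj fun h => hij (Subtype.ext h)
    rw [← lintegral_iUnion (fun i : S => hEmeas i) hdisj f]
    refine lintegral_mono_set ?_
    exact iUnion_subset fun i => (hEsub i).trans i.2
  have step4 : (∫⁻ x in R, f x) ≤ cA * ∫⁻ x in R, w x := hAinf b s hs
  calc (∑' i : ι, S.indicator (fun i => ∫⁻ x in cube (a i) (r i), w x) i)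
      ≤ 2 * ∑' i : ι, S.indicator (fun i => ∫⁻ x in E i, f x) i := step1.trans step2.le
    _ ≤ 2 * (cA * ∫⁻ x in R, w x) := mul_le_mul_right (step3.trans step4) _
    _ = 2 * cA * ∫⁻ x in R, w x := by rw [mul_assoc]
end

section
/- Dyadic Carleson embedding: let 𝒟 be a dyadic grid, w a weight, and (a_Q)_{Q∈𝒟} nonnegative numbers satisfying Σ_{Q⊆R, Q∈𝒟} a_Q ≤ K·w(R) for all R ∈ 𝒟. Then for every g ∈ L²(w), Σ_{Q∈𝒟} a_Q·((1/w(Q))∫_Q g·w dx)² ≤ 4K·‖g‖²_{L²(w)}. -/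
open Set MeasureTheory ENNReal

/-- The standard dyadic cube of generation `k` indexed by `m ∈ ℤⁿ`. -/
def dyadicCube {n : ℕ} (k : ℤ) (m : Fin n → ℤ) : Set (Fin n → ℝ) :=
  {x | ∀ i, (m i : ℝ) * (2:ℝ) ^ k ≤ x i ∧ x i < ((m i : ℝ) + 1) * (2:ℝ) ^ k}

namespace CarlesonAux

open scoped Classical

lemma dyadicCube_eq_pi {n : ℕ} (k : ℤ) (m : Fin n → ℤ) :
    dyadicCube k m =
      Set.pi Set.univ fun i => Set.Ico ((m i : ℝ) * 2 ^ k) (((m i : ℝ) + 1) * 2 ^ k) := by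
  ext x; simp [dyadicCube, Set.mem_pi]

lemma measurableSet_dyadicCube {n : ℕ} (k : ℤ) (m : Fin n → ℤ) :
    MeasurableSet (dyadicCube k m) := by
  rw [dyadicCube_eq_pi]; exact MeasurableSet.univ_pi fun i => measurableSet_Ico

lemma nonempty_dyadicCube {n : ℕ} (k : ℤ) (m : Fin n → ℤ) :
    (dyadicCube k m).Nonempty := by
  refine ⟨fun i => (m i : ℝ) * 2 ^ k, fun i => ⟨le_rfl, ?_⟩⟩
  have h2 : (0:ℝ) < 2 ^ k := by positivity
  show (m i : ℝ) * 2 ^ k < ((m i : ℝ) + 1) * 2 ^ k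
  nlinarith

lemma pow_split {k k' : ℤ} (hk : k ≤ k') :
    (2:ℝ) ^ k' = 2 ^ k * ((2 ^ (k' - k).toNat : ℤ) : ℝ) := by
  have h1 : ((2 ^ (k' - k).toNat : ℤ) : ℝ) = (2:ℝ) ^ ((k' - k).toNat : ℤ) := by
    push_cast; rw [zpow_natCast]
  rw [h1, Int.toNat_of_nonneg (by omega), ← zpow_add₀ (two_ne_zero)]
  ring_nf

lemma subset_of_le {n : ℕ} {k k' : ℤ} {m m' : Fin n → ℤ} (hk : k ≤ k')
    (hne : (dyadicCube k m ∩ dyadicCube k' m').Nonempty) :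
    dyadicCube k m ⊆ dyadicCube k' m' := by
  obtain ⟨x, hx1, hx2⟩ := hne
  intro y hy
  intro i
  have h2k : (0:ℝ) < 2 ^ k := by positivity
  set c : ℤ := 2 ^ (k' - k).toNat with hc
  have hsplit : (2:ℝ) ^ k' = 2 ^ k * (c : ℝ) := pow_split hk
  obtain ⟨hxl, hxr⟩ := hx1 i
  obtain ⟨hxl', hxr'⟩ := hx2 i
  obtain ⟨hyl, hyr⟩ := hy i
  -- (A) : m' i * 2^k' ≤ m i * 2^k
  have hA : (m' i : ℝ) * 2 ^ k' ≤ (m i : ℝ) * 2 ^ k := by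
    by_contra hcon
    push_neg at hcon
    -- m i * 2^k < m' i * 2^k * c  ⇒ m i < m' i * c (ℤ) ⇒ m i + 1 ≤ m' i * c
    have h1 : (m i : ℝ) < (m' i : ℝ) * (c : ℝ) := by
      rw [hsplit] at hcon
      have := (mul_lt_mul_iff_left₀ h2k).mp (by linarith [hcon] : (m i : ℝ) * 2 ^ k < ((m' i : ℝ) * (c:ℝ)) * 2 ^ k)
      exact this
    have h2 : m i + 1 ≤ m' i * c := by exact_mod_cast Int.add_one_le_iff.mpr (by exact_mod_cast h1)
    have h3 : ((m i : ℝ) + 1) * 2 ^ k ≤ (m' i : ℝ) * 2 ^ k' := by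
      rw [hsplit]
      have : ((m i : ℝ) + 1) ≤ (m' i : ℝ) * (c:ℝ) := by exact_mod_cast h2
      nlinarith
    linarith
  -- (B) : (m i + 1) * 2^k ≤ (m' i + 1) * 2^k'
  have hB : ((m i : ℝ) + 1) * 2 ^ k ≤ ((m' i : ℝ) + 1) * 2 ^ k' := by
    by_contra hcon
    push_neg at hcon
    have h1 : ((m' i : ℝ) + 1) * (c : ℝ) < (m i : ℝ) + 1 := by
      rw [hsplit] at hcon
      have := (mul_lt_mul_iff_left₀ h2k).mp
        (by linarith [hcon] : (((m' i : ℝ) + 1) * (c:ℝ)) * 2 ^ k < ((m i : ℝ) + 1) * 2 ^ k)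
      exact this
    have h2 : (m' i + 1) * c ≤ m i := by
      have : (m' i + 1) * c < m i + 1 := by exact_mod_cast h1
      omega
    have h3 : ((m' i : ℝ) + 1) * 2 ^ k' ≤ (m i : ℝ) * 2 ^ k := by
      rw [hsplit]
      have : ((m' i : ℝ) + 1) * (c:ℝ) ≤ (m i : ℝ) := by exact_mod_cast h2
      nlinarith
    linarith
  constructor
  · linarith
  · linarith

def IsDyadic {n : ℕ} (s : Set (Fin n → ℝ)) : Prop := ∃ k m, s = dyadicCube k m

lemma nested {n : ℕ} {s t : Set (Fin n → ℝ)} (hs : IsDyadic s) (ht : IsDyadic t)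
    (h : (s ∩ t).Nonempty) : s ⊆ t ∨ t ⊆ s := by
  obtain ⟨k, m, rfl⟩ := hs
  obtain ⟨k', m', rfl⟩ := ht
  rcases le_total k k' with hk | hk
  · exact Or.inl (subset_of_le hk h)
  · exact Or.inr (subset_of_le hk (by rwa [Set.inter_comm] at h))

lemma exists_maximal_cover {n : ℕ} (C : Finset (Set (Fin n → ℝ)))
    (hC : ∀ c ∈ C, IsDyadic c) :
    ∃ D : Finset (Set (Fin n → ℝ)), D ⊆ C ∧ (↑D : Set (Set (Fin n → ℝ))).Pairwise Disjoint ∧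
      (∀ c ∈ C, ∃ d ∈ D, c ⊆ d) := by
  classical
  refine ⟨C.filter (fun c => ∀ c' ∈ C, c ⊆ c' → c' ⊆ c), Finset.filter_subset _ _, ?_, ?_⟩
  · intro d hd d' hd' hne
    simp only [Finset.coe_filter, Set.mem_setOf_eq, Finset.mem_filter] at hd hd'
    by_contra hdis
    rw [Set.not_disjoint_iff_nonempty_inter] at hdis
    rcases nested (hC d hd.1) (hC d' hd'.1) hdis with hsub | hsub
    · exact hne (le_antisymm hsub (hd.2 d' hd'.1 hsub))
    · exact hne (le_antisymm (hd'.2 d hd.1 hsub) hsub)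
  · intro c hc
    have hS : (C.filter (fun c' => c ⊆ c')).Nonempty := ⟨c, by simp [hc]⟩
    obtain ⟨d, hd, hmax⟩ := Finset.exists_maximal hS
    simp only [Finset.mem_filter] at hd
    refine ⟨d, ?_, hd.2⟩
    simp only [Finset.mem_filter]
    refine ⟨hd.1, fun c' hc' hdc' => ?_⟩
    have hc'S : c' ∈ C.filter (fun c' => c ⊆ c') := by
      simp only [Finset.mem_filter]; exact ⟨hc', hd.2.trans hdc'⟩
    exact hmax hc'S hdc'



lemma tele (f : ℕ → ℝ≥0∞) (hmono : Monotone f) (hfin : ∀ s, f s ≠ ∞) (t : ℕ) :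
    ∑ s ∈ Finset.range t, (f (s+1) - f s) = f t - f 0 := by
  induction t with
  | zero => simp
  | succ t ih =>
    rw [Finset.sum_range_succ, ih]
    have h0 : f 0 ≠ ⊤ := hfin 0
    rw [← ENNReal.add_right_inj h0]
    have h1 : f 0 + (f t - f 0 + (f (t+1) - f t)) = (f 0 + (f t - f 0)) + (f (t+1) - f t) := by ring
    rw [h1, add_tsub_cancel_of_le (hmono (Nat.zero_le t)),
      add_tsub_cancel_of_le (hmono (Nat.le_succ t)), add_tsub_cancel_of_le (hmono (Nat.zero_le _))]

lemma sq_diff {a b : ℝ≥0∞} (hb : b ≤ a) (ha : a ≠ ⊤) : a^2 - b^2 = (a+b)*(a-b) := by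
  lift b to NNReal using (lt_of_le_of_lt hb ha.lt_top).ne
  lift a to NNReal using ha
  have hb' : b ≤ a := by exact_mod_cast hb
  have key : a^2 - b^2 = (a+b)*(a-b) := by
    apply NNReal.coe_injective
    push_cast [NNReal.coe_sub hb', NNReal.coe_sub (pow_le_pow_left₀ zero_le hb' 2)]
    ring
  rw [← ENNReal.coe_pow, ← ENNReal.coe_pow, ← ENNReal.coe_sub, ← ENNReal.coe_add,
    ← ENNReal.coe_sub, ← ENNReal.coe_mul, key]

variable {n : ℕ}

/-- Union of maximal cover equals union of the family. -/
lemma cover_union_eq (L : Finset (ℤ × (Fin n → ℤ))) (D : Finset (Set (Fin n → ℝ)))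
    (hDC : D ⊆ L.image (fun i => dyadicCube i.1 i.2))
    (hcover : ∀ c ∈ L.image (fun i => dyadicCube i.1 i.2), ∃ d ∈ D, c ⊆ d) :
    ⋃ d ∈ D, d = ⋃ i ∈ L, dyadicCube i.1 i.2 := by
  apply subset_antisymm
  · intro x hx
    simp only [Set.mem_iUnion] at hx ⊢
    obtain ⟨d, hd, hxd⟩ := hx
    obtain ⟨i, hi, rfl⟩ := Finset.mem_image.mp (hDC hd)
    exact ⟨i, hi, hxd⟩
  · intro x hx
    simp only [Set.mem_iUnion] at hx ⊢
    obtain ⟨i, hi, hxi⟩ := hx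
    obtain ⟨d, hd, hsub⟩ := hcover _ (Finset.mem_image_of_mem _ hi)
    exact ⟨d, hd, hsub hxi⟩

lemma mem_cover_dyadic (L : Finset (ℤ × (Fin n → ℤ))) {d : Set (Fin n → ℝ)}
    {D : Finset (Set (Fin n → ℝ))}
    (hDC : D ⊆ L.image (fun i => dyadicCube i.1 i.2)) (hd : d ∈ D) :
    ∃ j ∈ L, dyadicCube j.1 j.2 = d := by
  obtain ⟨j, hj, rfl⟩ := Finset.mem_image.mp (hDC hd)
  exact ⟨j, hj, rfl⟩

lemma dyadic_of_mem (L : Finset (ℤ × (Fin n → ℤ))) :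
    ∀ c ∈ L.image (fun i => dyadicCube i.1 i.2), IsDyadic c := by
  intro c hc
  obtain ⟨i, _, rfl⟩ := Finset.mem_image.mp hc
  exact ⟨i.1, i.2, rfl⟩

lemma measurable_of_dyadic {d : Set (Fin n → ℝ)} (h : IsDyadic d) : MeasurableSet d := by
  obtain ⟨k, m, rfl⟩ := h
  exact measurableSet_dyadicCube k m

set_option maxHeartbeats 1000000 in
lemma level_carleson (μw : Measure (Fin n → ℝ)) (A : ℤ × (Fin n → ℤ) → ℝ≥0∞) (K : ℝ≥0∞)
    (hCar : ∀ j : ℤ × (Fin n → ℤ),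
      (∑' i : ℤ × (Fin n → ℤ),
        {q : ℤ × (Fin n → ℤ) | dyadicCube q.1 q.2 ⊆ dyadicCube j.1 j.2}.indicator A i)
        ≤ K * μw (dyadicCube j.1 j.2))
    (L : Finset (ℤ × (Fin n → ℤ))) :
    ∑ i ∈ L, A i ≤ K * μw (⋃ i ∈ L, dyadicCube i.1 i.2) := by
  classical
  obtain ⟨D, hDC, hdisj, hcover⟩ :=
    exists_maximal_cover (L.image (fun i => dyadicCube i.1 i.2)) (dyadic_of_mem L)
  set φ : ℤ × (Fin n → ℤ) → Set (Fin n → ℝ) := fun i =>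
    if h : ∃ d ∈ D, dyadicCube i.1 i.2 ⊆ d then h.choose else ∅ with hφdef
  have hφ : ∀ i ∈ L, φ i ∈ D ∧ dyadicCube i.1 i.2 ⊆ φ i := by
    intro i hi
    have h : ∃ d ∈ D, dyadicCube i.1 i.2 ⊆ d := hcover _ (Finset.mem_image_of_mem _ hi)
    simp only [hφdef, dif_pos h]
    exact h.choose_spec
  have hmaps : ∀ i ∈ L, φ i ∈ D := fun i hi => (hφ i hi).1
  rw [← Finset.sum_fiberwise_of_maps_to hmaps A]
  have hstep : ∀ d ∈ D, ∑ i ∈ L.filter (fun i => φ i = d), A i ≤ K * μw d := by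
    intro d hd
    obtain ⟨j, hj, hjd⟩ := mem_cover_dyadic L hDC hd
    calc ∑ i ∈ L.filter (fun i => φ i = d), A i
        = ∑ i ∈ L.filter (fun i => φ i = d),
            ({q : ℤ × (Fin n → ℤ) | dyadicCube q.1 q.2 ⊆ dyadicCube j.1 j.2}.indicator A) i := by
          apply Finset.sum_congr rfl
          intro i hi
          rw [Finset.mem_filter] at hi
          rw [Set.indicator_of_mem]
          show dyadicCube i.1 i.2 ⊆ dyadicCube j.1 j.2
          rw [hjd, ← hi.2]
          exact (hφ i hi.1).2
      _ ≤ ∑' i : ℤ × (Fin n → ℤ),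
            ({q : ℤ × (Fin n → ℤ) | dyadicCube q.1 q.2 ⊆ dyadicCube j.1 j.2}.indicator A) i :=
          ENNReal.sum_le_tsum _
      _ ≤ K * μw (dyadicCube j.1 j.2) := hCar j
      _ = K * μw d := by rw [hjd]
  calc ∑ d ∈ D, ∑ i ∈ L.filter (fun i => φ i = d), A i
      ≤ ∑ d ∈ D, K * μw d := Finset.sum_le_sum hstep
    _ = K * ∑ d ∈ D, μw d := by rw [Finset.mul_sum]
    _ = K * μw (⋃ d ∈ D, d) := by
        rw [measure_biUnion_finset (fun x hx y hy hxy => hdisj hx hy hxy)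
          (fun d hd => measurable_of_dyadic (dyadic_of_mem L d (hDC hd)))]
    _ = K * μw (⋃ i ∈ L, dyadicCube i.1 i.2) := by rw [cover_union_eq L D hDC hcover]

set_option maxHeartbeats 1000000 in
lemma weak_bound (μw : Measure (Fin n → ℝ)) (g : (Fin n → ℝ) → ℝ≥0∞)
    (b : ℝ≥0∞) (hb : b ≠ 0) (L : Finset (ℤ × (Fin n → ℤ)))
    (hT : ∀ i ∈ L, b ≤ (∫⁻ x in dyadicCube i.1 i.2, g x ∂μw) / μw (dyadicCube i.1 i.2)) :
    b * μw (⋃ i ∈ L, dyadicCube i.1 i.2)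
      ≤ ∫⁻ x in ⋃ i ∈ L, dyadicCube i.1 i.2, g x ∂μw := by
  classical
  have hcube : ∀ i ∈ L, b * μw (dyadicCube i.1 i.2) ≤ ∫⁻ x in dyadicCube i.1 i.2, g x ∂μw := by
    intro i hi
    rcases eq_or_ne (μw (dyadicCube i.1 i.2)) ⊤ with htop | htop
    · exfalso
      have := hT i hi
      rw [htop, ENNReal.div_top] at this
      exact hb (le_antisymm this zero_le)
    rcases eq_or_ne (μw (dyadicCube i.1 i.2)) 0 with hzero | hzero
    · rw [hzero, mul_zero]; exact zero_le
    exact (ENNReal.le_div_iff_mul_le (Or.inl hzero) (Or.inl htop)).mp (hT i hi)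
  obtain ⟨D, hDC, hdisj, hcover⟩ :=
    exists_maximal_cover (L.image (fun i => dyadicCube i.1 i.2)) (dyadic_of_mem L)
  have hmeas : ∀ d ∈ D, MeasurableSet d :=
    fun d hd => measurable_of_dyadic (dyadic_of_mem L d (hDC hd))
  have hUeq : ⋃ d ∈ D, d = ⋃ i ∈ L, dyadicCube i.1 i.2 := cover_union_eq L D hDC hcover
  rw [← hUeq]
  calc b * μw (⋃ d ∈ D, d)
      ≤ b * ∑ d ∈ D, μw d := by
        exact mul_le_mul_right (measure_biUnion_finset_le D _) b
    _ = ∑ d ∈ D, b * μw d := by rw [Finset.mul_sum]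
    _ ≤ ∑ d ∈ D, ∫⁻ x in d, g x ∂μw := by
        apply Finset.sum_le_sum
        intro d hd
        obtain ⟨j, hj, hjd⟩ := mem_cover_dyadic L hDC hd
        rw [← hjd]
        exact hcube j hj
    _ = ∫⁻ x in ⋃ d ∈ D, d, g x ∂μw := by
        rw [lintegral_biUnion_finset (fun x hx y hy hxy => hdisj hx hy hxy) hmeas]



lemma holder2 {α : Type*} [MeasurableSpace α] (μ : Measure α) {f h : α → ℝ≥0∞}
    (hf : Measurable f) (hh : Measurable h) :
    ∫⁻ x, f x * h x ∂μ ≤ (∫⁻ x, f x ^ 2 ∂μ) ^ (1/2:ℝ) * (∫⁻ x, h x ^ 2 ∂μ) ^ (1/2:ℝ) := by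
  have hconj : Real.HolderConjugate 2 2 := Real.holderConjugate_iff.mpr ⟨by norm_num, by norm_num⟩
  have := lintegral_mul_le_Lp_mul_Lq μ hconj hf.aemeasurable hh.aemeasurable
  simp only [Pi.mul_apply] at this
  calc ∫⁻ x, f x * h x ∂μ ≤ (∫⁻ x, f x ^ (2:ℝ) ∂μ) ^ (1/2:ℝ) * (∫⁻ x, h x ^ (2:ℝ) ∂μ) ^ (1/2:ℝ) := this
    _ = (∫⁻ x, f x ^ 2 ∂μ) ^ (1/2:ℝ) * (∫⁻ x, h x ^ 2 ∂μ) ^ (1/2:ℝ) := by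
        congr 1 <;> congr 1 <;> apply lintegral_congr <;> intro x <;>
          rw [show ((2:ℝ) = ((2:ℕ):ℝ)) by norm_num, ENNReal.rpow_natCast]

set_option maxHeartbeats 2000000 in
lemma core_bound (μw : Measure (Fin n → ℝ)) (g : (Fin n → ℝ) → ℝ≥0∞) (hg : Measurable g)
    (A : ℤ × (Fin n → ℤ) → ℝ≥0∞) (K : ℝ≥0∞)
    (hCar : ∀ j : ℤ × (Fin n → ℤ),
      (∑' i : ℤ × (Fin n → ℤ),
        {q : ℤ × (Fin n → ℤ) | dyadicCube q.1 q.2 ⊆ dyadicCube j.1 j.2}.indicator A i)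
        ≤ K * μw (dyadicCube j.1 j.2))
    (hGfin : (∫⁻ x, g x ^ 2 ∂μw) ≠ ⊤) (F : Finset (ℤ × (Fin n → ℤ))) :
    ∑ i ∈ F, A i * ((∫⁻ x in dyadicCube i.1 i.2, g x ∂μw) / μw (dyadicCube i.1 i.2)) ^ 2
      ≤ 4 * K * ∫⁻ x, g x ^ 2 ∂μw := by
  classical
  set G := ∫⁻ x, g x ^ 2 ∂μw with hGdef
  set T : ℤ × (Fin n → ℤ) → ℝ≥0∞ :=
    fun i => (∫⁻ x in dyadicCube i.1 i.2, g x ∂μw) / μw (dyadicCube i.1 i.2) with hTdef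
  -- finiteness of averages
  have hnum : ∀ i : ℤ × (Fin n → ℤ), μw (dyadicCube i.1 i.2) ≠ ⊤ →
      (∫⁻ x in dyadicCube i.1 i.2, g x ∂μw) ≠ ⊤ := by
    intro i hμ
    have h1 : ∫⁻ x in dyadicCube i.1 i.2, g x ∂μw = ∫⁻ x in dyadicCube i.1 i.2, g x * 1 ∂μw := by
      simp
    rw [h1]
    have h2 := holder2 (μw.restrict (dyadicCube i.1 i.2)) hg measurable_const (h := fun _ => 1)
    refine ne_top_of_le_ne_top ?_ h2
    have h3 : (∫⁻ x in dyadicCube i.1 i.2, g x ^ 2 ∂μw) ≤ G := by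
      exact setLIntegral_le_lintegral _ _
    have h4 : (∫⁻ (x : Fin n → ℝ) in dyadicCube i.1 i.2, (1:ℝ≥0∞) ^ 2 ∂μw) = μw (dyadicCube i.1 i.2) := by
      simp [setLIntegral_const]
    rw [h4]
    exact ENNReal.mul_ne_top
      (ENNReal.rpow_ne_top_of_nonneg (by norm_num) (ne_top_of_le_ne_top hGfin h3))
      (ENNReal.rpow_ne_top_of_nonneg (by norm_num) hμ)
  have hTfin : ∀ i, T i ≠ ⊤ := by
    intro i
    rcases eq_or_ne (μw (dyadicCube i.1 i.2)) ⊤ with hμ | hμ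
    · simp [hTdef, hμ]
    rcases eq_or_ne (μw (dyadicCube i.1 i.2)) 0 with hμ0 | hμ0
    · have hres : μw.restrict (dyadicCube i.1 i.2) = 0 := Measure.restrict_eq_zero.mpr hμ0
      simp [hTdef, hres]
    · exact (ENNReal.div_lt_top (hnum i hμ) hμ0).ne
  -- the finite set of positive values of T on F
  set V : Finset ℝ≥0∞ := (F.image T).filter (fun v => v ≠ 0) with hVdef
  set r : ℕ := V.card with hrdef
  have hVfin : ∀ v ∈ V, v ≠ ⊤ := by
    intro v hv
    rw [hVdef, Finset.mem_filter, Finset.mem_image] at hv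
    obtain ⟨⟨i, _, rfl⟩, _⟩ := hv
    exact hTfin i
  have hVpos : ∀ v ∈ V, v ≠ 0 := fun v hv => (Finset.mem_filter.mp hv).2
  set mon := V.orderIsoOfFin hrdef.symm with hmon
  set c : ℕ → ℝ≥0∞ := fun s =>
    if h : 1 ≤ s ∧ 0 < r then
      (↑(mon ⟨min (s-1) (r-1), by have := h.2; omega⟩) : ℝ≥0∞) else 0 with hcdef
  have hcmem : ∀ s, 1 ≤ s → 0 < r → c s ∈ V := by
    intro s h1 h2
    simp only [hcdef, dif_pos (And.intro h1 h2)]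
    exact (mon _).2
  have hc0 : c 0 = 0 := by simp [hcdef]
  have hcfin : ∀ s, c s ≠ ⊤ := by
    intro s
    by_cases h : 1 ≤ s ∧ 0 < r
    · exact hVfin _ (hcmem s h.1 h.2)
    · simp only [hcdef, dif_neg h]
      exact ENNReal.zero_ne_top
  have hcpos : ∀ s, 1 ≤ s → 0 < r → c s ≠ 0 := fun s h1 h2 => hVpos _ (hcmem s h1 h2)
  have hcmono : Monotone c := by
    intro s s' hss'
    by_cases h' : 1 ≤ s' ∧ 0 < r
    · by_cases h : 1 ≤ s ∧ 0 < r
      · simp only [hcdef, dif_pos h, dif_pos h']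
        apply Subtype.coe_le_coe.mpr
        apply mon.monotone
        simp only [Fin.mk_le_mk]
        exact min_le_min (Nat.sub_le_sub_right hss' 1) le_rfl
      · simp only [hcdef, dif_neg h, dif_pos h']
        exact zero_le
    · have h : ¬(1 ≤ s ∧ 0 < r) := fun hh => h' ⟨le_trans hh.1 hss', hh.2⟩
      simp only [hcdef, dif_neg h, dif_neg h']
      exact le_rfl
  have hcstrict : ∀ s s', s < s' → s' ≤ r → c s < c s' := by
    intro s s' hss' hs'r
    have hr : 0 < r := by omega
    have h' : 1 ≤ s' ∧ 0 < r := ⟨by omega, hr⟩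
    by_cases h : 1 ≤ s ∧ 0 < r
    · simp only [hcdef, dif_pos h, dif_pos h']
      apply Subtype.coe_lt_coe.mpr
      apply mon.strictMono
      simp only [Fin.mk_lt_mk]
      rw [min_eq_left (by omega), min_eq_left (by omega)]
      omega
    · have hs0 : s = 0 := by omega
      rw [hs0, hc0]
      exact lt_of_le_of_ne zero_le (Ne.symm (hcpos s' h'.1 hr))
  have hsurjV : ∀ v ∈ V, ∃ t, 1 ≤ t ∧ t ≤ r ∧ c t = v := by
    intro v hv
    set idx := mon.symm ⟨v, hv⟩ with hidx
    have hlt : (idx : ℕ) < r := idx.isLt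
    refine ⟨(idx : ℕ) + 1, by omega, by omega, ?_⟩
    have h : 1 ≤ (idx:ℕ)+1 ∧ 0 < r := ⟨by omega, by omega⟩
    simp only [hcdef, dif_pos h]
    have hfin : (⟨min ((idx:ℕ)+1-1) (r-1), by have := h.2; omega⟩ : Fin r) = idx := by
      apply Fin.ext
      simp only [Nat.add_sub_cancel]
      exact min_eq_left (by omega)
    rw [hfin, hidx]
    simp
  -- level sets and unions
  set Us : ℕ → Set (Fin n → ℝ) :=
    fun s => ⋃ i ∈ F.filter (fun i => c s ≤ T i), dyadicCube i.1 i.2 with hUdef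
  have hUmeas : ∀ s, MeasurableSet (Us s) := fun s =>
    Finset.measurableSet_biUnion _ (fun i _ => measurableSet_dyadicCube i.1 i.2)
  have hUanti : ∀ s s', s ≤ s' → Us s' ⊆ Us s := by
    intro s s' hss' x hx
    simp only [hUdef, Set.mem_iUnion] at hx ⊢
    obtain ⟨i, hi, hxi⟩ := hx
    rw [Finset.mem_filter] at hi
    exact ⟨i, Finset.mem_filter.mpr ⟨hi.1, le_trans (hcmono hss') hi.2⟩, hxi⟩
  -- Step A : layer decomposition of each term
  have stepA : ∀ i ∈ F, A i * T i ^ 2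
      = ∑ s ∈ Finset.range r, (if c (s+1) ≤ T i then A i * (c (s+1)^2 - c s^2) else 0) := by
    intro i hi
    rcases eq_or_ne (T i) 0 with hTi | hTi
    · trans (0:ℝ≥0∞)
      · rw [hTi]; simp
      · symm
        apply Finset.sum_eq_zero
        intro s hs
        rw [if_neg]
        intro hle
        have hsr := Finset.mem_range.mp hs
        have hz : c (s+1) = 0 := le_antisymm (hTi ▸ hle) zero_le
        exact hcpos (s+1) (by omega) (by omega) hz
    · have hvV : T i ∈ V := by
        rw [hVdef]
        exact Finset.mem_filter.mpr ⟨Finset.mem_image_of_mem T hi, hTi⟩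
      obtain ⟨t, ht1, htr, hct⟩ := hsurjV _ hvV
      have hcond : ∀ s, s < r → ((c (s+1) ≤ T i) ↔ s < t) := by
        intro s hs
        rw [← hct]
        constructor
        · intro h
          by_contra hn
          push_neg at hn
          exact absurd h (not_le.mpr (hcstrict t (s+1) (by omega) (by omega)))
        · intro h
          exact hcmono (by omega)
      have htele := tele (fun s => c s ^ 2)
        (fun u v huv => pow_le_pow_left' (hcmono huv) 2)
        (fun s => ENNReal.pow_ne_top (hcfin s)) t
      calc A i * T i ^ 2
          = A i * ∑ s ∈ Finset.range t, (c (s+1)^2 - c s^2) := by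
            rw [htele, hc0, ← hct]
            simp
        _ = ∑ s ∈ Finset.range t, (A i * (c (s+1)^2 - c s^2)) := Finset.mul_sum _ _ _
        _ = ∑ s ∈ Finset.range r, (if s < t then A i * (c (s+1)^2 - c s^2) else 0) := by
            rw [← Finset.sum_filter]
            apply Finset.sum_congr ?_ (fun _ _ => rfl)
            ext s
            simp only [Finset.mem_range, Finset.mem_filter]
            omega
        _ = ∑ s ∈ Finset.range r, (if c (s+1) ≤ T i then A i * (c (s+1)^2 - c s^2) else 0) := by
            apply Finset.sum_congr rfl
            intro s hs
            have hiff := hcond s (Finset.mem_range.mp hs)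
            by_cases hst : s < t
            · rw [if_pos hst, if_pos (hiff.mpr hst)]
            · rw [if_neg hst, if_neg (fun hcc => hst (hiff.mp hcc))]
  -- Step B : swap the sums
  have stepB : ∑ i ∈ F, A i * T i ^ 2
      = ∑ s ∈ Finset.range r,
          (c (s+1)^2 - c s^2) * ∑ i ∈ F.filter (fun i => c (s+1) ≤ T i), A i := by
    rw [Finset.sum_congr rfl stepA, Finset.sum_comm]
    apply Finset.sum_congr rfl
    intro s _
    rw [← Finset.sum_filter, ← Finset.sum_mul, mul_comm]
  -- Carleson bound on each level
  have hCarl : ∀ s, ∑ i ∈ F.filter (fun i => c (s+1) ≤ T i), A i ≤ K * μw (Us (s+1)) := by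
    intro s
    exact level_carleson μw A K hCar (F.filter (fun i => c (s+1) ≤ T i))
  -- weak type bound on each level
  have hweak : ∀ s, s < r → c (s+1) * μw (Us (s+1)) ≤ ∫⁻ x in Us (s+1), g x ∂μw := by
    intro s hs
    exact weak_bound μw g (c (s+1)) (hcpos (s+1) (by omega) (by omega))
      (F.filter (fun i => c (s+1) ≤ T i)) (fun i hi => (Finset.mem_filter.mp hi).2)
  -- the maximal function
  set M : (Fin n → ℝ) → ℝ≥0∞ :=
    fun x => ∑ s ∈ Finset.range r, (Us (s+1)).indicator (fun _ => c (s+1) - c s) x with hMdef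
  have hMmeas : Measurable M := by
    apply Finset.measurable_sum
    intro s _
    exact Measurable.indicator measurable_const (hUmeas (s+1))
  have htelec := tele c hcmono hcfin
  have htele2 := tele (fun s => c s ^ 2)
    (fun u v huv => pow_le_pow_left' (hcmono huv) 2)
    (fun s => ENNReal.pow_ne_top (hcfin s))
  have keysq : ∀ ρ, ρ ≤ r → ∀ x,
      (∑ s ∈ Finset.range ρ, (Us (s+1)).indicator (fun _ => c (s+1) - c s) x) ^ 2
        = ∑ s ∈ Finset.range ρ, (Us (s+1)).indicator (fun _ => c (s+1)^2 - c s^2) x := by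
    intro ρ
    induction ρ with
    | zero => intro _ x; simp
    | succ ρ ih =>
      intro hρr x
      by_cases hx : x ∈ Us (ρ+1)
      · have hxall : ∀ s, s < ρ+1 → x ∈ Us (s+1) :=
          fun s hs => hUanti (s+1) (ρ+1) (by omega) hx
        have e1 : ∑ s ∈ Finset.range (ρ+1), (Us (s+1)).indicator (fun _ => c (s+1) - c s) x
            = ∑ s ∈ Finset.range (ρ+1), (c (s+1) - c s) := by
          apply Finset.sum_congr rfl
          intro s hs
          exact Set.indicator_of_mem (hxall s (Finset.mem_range.mp hs)) _
        have e2 : ∑ s ∈ Finset.range (ρ+1), (Us (s+1)).indicator (fun _ => c (s+1)^2 - c s^2) x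
            = ∑ s ∈ Finset.range (ρ+1), (c (s+1)^2 - c s^2) := by
          apply Finset.sum_congr rfl
          intro s hs
          exact Set.indicator_of_mem (hxall s (Finset.mem_range.mp hs)) _
        rw [e1, e2, htelec (ρ+1), htele2 (ρ+1), hc0]
        simp
      · rw [Finset.sum_range_succ, Finset.sum_range_succ,
          Set.indicator_of_notMem hx, Set.indicator_of_notMem hx, add_zero, add_zero]
        exact ih (by omega) x
  set I : ℝ≥0∞ := ∑ s ∈ Finset.range r, (c (s+1)^2 - c s^2) * μw (Us (s+1)) with hIdef
  have hM2 : ∫⁻ x, M x ^ 2 ∂μw = I := by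
    have hpt : ∀ x, M x ^ 2
        = ∑ s ∈ Finset.range r, (Us (s+1)).indicator (fun _ => c (s+1)^2 - c s^2) x :=
      fun x => keysq r le_rfl x
    rw [lintegral_congr hpt,
      lintegral_finset_sum _ (fun s _ => Measurable.indicator measurable_const (hUmeas (s+1)))]
    apply Finset.sum_congr rfl
    intro s _
    rw [lintegral_indicator (hUmeas (s+1)), setLIntegral_const]
  have hgM : ∫⁻ x, g x * M x ∂μw
      = ∑ s ∈ Finset.range r, (c (s+1) - c s) * ∫⁻ x in Us (s+1), g x ∂μw := by
    have hpt : ∀ x, g x * M x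
        = ∑ s ∈ Finset.range r, (Us (s+1)).indicator (fun y => (c (s+1) - c s) * g y) x := by
      intro x
      simp only [hMdef]
      rw [Finset.mul_sum]
      apply Finset.sum_congr rfl
      intro s _
      by_cases hx : x ∈ Us (s+1)
      · rw [Set.indicator_of_mem hx, Set.indicator_of_mem hx]; ring
      · rw [Set.indicator_of_notMem hx, Set.indicator_of_notMem hx]; ring
    rw [lintegral_congr hpt,
      lintegral_finset_sum _ (fun s _ =>
        (Measurable.indicator (measurable_const.mul hg) (hUmeas (s+1)) :
          Measurable ((Us (s+1)).indicator (fun y => (c (s+1) - c s) * g y))))]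
    apply Finset.sum_congr rfl
    intro s _
    rw [lintegral_indicator (hUmeas (s+1)), lintegral_const_mul _ hg]
  have hUfin : ∀ s, s < r → μw (Us (s+1)) ≠ ⊤ := by
    intro s hs
    have hb := hcpos (s+1) (by omega) (by omega)
    refine (lt_of_le_of_lt (measure_biUnion_finset_le _ _) ?_).ne
    refine ENNReal.sum_lt_top.mpr (fun i hi => ?_)
    rcases eq_or_ne (μw (dyadicCube i.1 i.2)) ⊤ with hμ | hμ
    · exfalso
      have hle := (Finset.mem_filter.mp hi).2
      rw [hTdef] at hle
      simp only [hμ, ENNReal.div_top] at hle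
      exact hb (le_antisymm hle zero_le)
    · exact hμ.lt_top
  have hIfin : I ≠ ⊤ := by
    rw [hIdef]
    refine (ENNReal.sum_lt_top.mpr (fun s hs => ?_)).ne
    have h1 : c (s+1)^2 - c s^2 ≠ ⊤ :=
      fun h => (ENNReal.pow_ne_top (hcfin (s+1))) (top_le_iff.mp (h ▸ tsub_le_self))
    exact (ENNReal.mul_ne_top h1 (hUfin s (Finset.mem_range.mp hs))).lt_top
  have hIbound : I ≤ 2 * ∫⁻ x, g x * M x ∂μw := by
    rw [hgM, hIdef, Finset.mul_sum]
    apply Finset.sum_le_sum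
    intro s hs
    have hsr := Finset.mem_range.mp hs
    have e1 : c (s+1)^2 - c s^2 = (c (s+1) + c s) * (c (s+1) - c s) :=
      sq_diff (hcmono (Nat.le_succ s)) (hcfin (s+1))
    calc (c (s+1)^2 - c s^2) * μw (Us (s+1))
        = (c (s+1) + c s) * (c (s+1) - c s) * μw (Us (s+1)) := by rw [e1]
      _ ≤ (2 * c (s+1)) * (c (s+1) - c s) * μw (Us (s+1)) := by
          have h2 : c (s+1) + c s ≤ 2 * c (s+1) := by
            rw [two_mul]
            exact add_le_add_right (hcmono (Nat.le_succ s)) _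
          exact mul_le_mul_left (mul_le_mul_left h2 _) _
      _ = 2 * ((c (s+1) - c s) * (c (s+1) * μw (Us (s+1)))) := by ring
      _ ≤ 2 * ((c (s+1) - c s) * ∫⁻ x in Us (s+1), g x ∂μw) :=
          mul_le_mul_right (mul_le_mul_right (hweak s hsr) _) 2
  have hCS : ∫⁻ x, g x * M x ∂μw ≤ G ^ (1/2:ℝ) * I ^ (1/2:ℝ) := by
    have h := holder2 μw hg hMmeas
    rw [hM2] at h
    exact h
  have hI4G : I ≤ 4 * G := by
    rcases eq_or_ne I 0 with h0 | h0
    · rw [h0]; exact zero_le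
    have h1 : I ≤ (2 * G ^ (1/2:ℝ)) * I ^ (1/2:ℝ) := by
      calc I ≤ 2 * ∫⁻ x, g x * M x ∂μw := hIbound
        _ ≤ 2 * (G ^ (1/2:ℝ) * I ^ (1/2:ℝ)) := mul_le_mul_right hCS 2
        _ = (2 * G ^ (1/2:ℝ)) * I ^ (1/2:ℝ) := by ring
    have hhalf : I ^ (1/2:ℝ) * I ^ (1/2:ℝ) = I := by
      rw [← ENNReal.rpow_add _ _ h0 hIfin]
      norm_num
    have h2 : I ^ (1/2:ℝ) * I ^ (1/2:ℝ) ≤ (2 * G ^ (1/2:ℝ)) * I ^ (1/2:ℝ) := by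
      rw [hhalf]; exact h1
    have hIh0 : I ^ (1/2:ℝ) ≠ 0 := by
      rw [Ne, ENNReal.rpow_eq_zero_iff]
      rintro (⟨h, _⟩ | ⟨_, h⟩)
      · exact h0 h
      · norm_num at h
    have hIhfin : I ^ (1/2:ℝ) ≠ ⊤ := ENNReal.rpow_ne_top_of_nonneg (by norm_num) hIfin
    have h3 : I ^ (1/2:ℝ) ≤ 2 * G ^ (1/2:ℝ) := (ENNReal.mul_le_mul_iff_left hIh0 hIhfin).mp h2
    calc I = (I ^ (1/2:ℝ)) ^ 2 := by
          rw [← ENNReal.rpow_natCast (I ^ (1/2:ℝ)) 2, ← ENNReal.rpow_mul]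
          norm_num
      _ ≤ (2 * G ^ (1/2:ℝ)) ^ 2 := pow_le_pow_left' h3 2
      _ = 4 * G := by
          rw [mul_pow, ← ENNReal.rpow_natCast (G ^ (1/2:ℝ)) 2, ← ENNReal.rpow_mul]
          norm_num
  calc ∑ i ∈ F, A i * T i ^ 2
      = ∑ s ∈ Finset.range r,
          (c (s+1)^2 - c s^2) * ∑ i ∈ F.filter (fun i => c (s+1) ≤ T i), A i := stepB
    _ ≤ ∑ s ∈ Finset.range r, (c (s+1)^2 - c s^2) * (K * μw (Us (s+1))) :=
        Finset.sum_le_sum (fun s _ => mul_le_mul_right (hCarl s) _)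
    _ = K * I := by
        rw [hIdef, Finset.mul_sum]
        apply Finset.sum_congr rfl
        intro s _
        ring
    _ ≤ K * (4 * G) := mul_le_mul_right hI4G K
    _ = 4 * K * G := by ring


end CarlesonAux

/-- Dyadic Carleson embedding theorem: if the nonnegative coefficients `a k m`
attached to the dyadic cubes satisfy the Carleson packing condition
`∑_{Q ⊆ R} a_Q ≤ K w(R)` for every dyadic cube `R`, then for every `g`,
`∑_Q a_Q (avg_Q^w g)² ≤ 4 K ‖g‖²_{L²(w)}`. -/
theorem dyadic_carleson_embedding {n : ℕ}
    (w : (Fin n → ℝ) → ℝ≥0∞) (hw : Measurable w)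
    (a : ℤ → (Fin n → ℤ) → ℝ≥0∞) (K : ℝ≥0∞)
    (hCarleson : ∀ (k : ℤ) (m : Fin n → ℤ),
      (∑' (k' : ℤ) (m' : Fin n → ℤ),
          {q : ℤ × (Fin n → ℤ) | dyadicCube q.1 q.2 ⊆ dyadicCube k m}.indicator
            (fun q => a q.1 q.2) (k', m'))
        ≤ K * ∫⁻ x in dyadicCube k m, w x)
    (g : (Fin n → ℝ) → ℝ≥0∞) (hg : Measurable g) :
    (∑' (k : ℤ) (m : Fin n → ℤ),
        a k m *
          ((∫⁻ x in dyadicCube k m, g x * w x) / ∫⁻ x in dyadicCube k m, w x) ^ 2)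
      ≤ 4 * K * ∫⁻ x, g x ^ 2 * w x := by

  classical
  set μw : Measure (Fin n → ℝ) := volume.withDensity w with hμw
  have hwq : ∀ (k : ℤ) (m : Fin n → ℤ),
      (∫⁻ x in dyadicCube k m, w x) = μw (dyadicCube k m) :=
    fun k m => (withDensity_apply w (CarlesonAux.measurableSet_dyadicCube k m)).symm
  have hgw : ∀ (k : ℤ) (m : Fin n → ℤ),
      (∫⁻ x in dyadicCube k m, g x * w x) = ∫⁻ x in dyadicCube k m, g x ∂μw := by
    intro k m
    rw [hμw, restrict_withDensity (CarlesonAux.measurableSet_dyadicCube k m),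
      lintegral_withDensity_eq_lintegral_mul _ hw hg]
    apply lintegral_congr
    intro x
    simp [mul_comm]
  have hGeq : (∫⁻ x, g x ^ 2 * w x) = ∫⁻ x, g x ^ 2 ∂μw := by
    rw [hμw, lintegral_withDensity_eq_lintegral_mul _ hw (hg.pow_const 2)]
    apply lintegral_congr
    intro x
    simp [mul_comm]
  rw [hGeq]
  set A : ℤ × (Fin n → ℤ) → ℝ≥0∞ := fun q => a q.1 q.2 with hA
  have hCar' : ∀ j : ℤ × (Fin n → ℤ),
      (∑' i : ℤ × (Fin n → ℤ),
        {q : ℤ × (Fin n → ℤ) | dyadicCube q.1 q.2 ⊆ dyadicCube j.1 j.2}.indicator A i)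
        ≤ K * μw (dyadicCube j.1 j.2) := by
    intro j
    have h := hCarleson j.1 j.2
    rw [hwq] at h
    refine le_trans (le_of_eq ?_) h
    exact ENNReal.tsum_prod (f := fun k' m' =>
      {q : ℤ × (Fin n → ℤ) | dyadicCube q.1 q.2 ⊆ dyadicCube j.1 j.2}.indicator A (k', m'))
  have hLHS : (∑' (k : ℤ) (m : Fin n → ℤ),
        a k m *
          ((∫⁻ x in dyadicCube k m, g x * w x) / ∫⁻ x in dyadicCube k m, w x) ^ 2)
      = ∑' p : ℤ × (Fin n → ℤ),
          A p * ((∫⁻ x in dyadicCube p.1 p.2, g x ∂μw) / μw (dyadicCube p.1 p.2)) ^ 2 := by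
    rw [← ENNReal.tsum_prod (f := fun k m => a k m *
      ((∫⁻ x in dyadicCube k m, g x * w x) / ∫⁻ x in dyadicCube k m, w x) ^ 2)]
    apply tsum_congr
    intro p
    rw [hgw, hwq]
  rw [hLHS]
  rcases eq_or_ne K 0 with hK | hK
  · have hA0 : ∀ p : ℤ × (Fin n → ℤ), A p = 0 := by
      intro p
      have h := hCar' p
      rw [hK, zero_mul] at h
      have hmem : p ∈ {q : ℤ × (Fin n → ℤ) | dyadicCube q.1 q.2 ⊆ dyadicCube p.1 p.2} := by
        simp only [Set.mem_setOf_eq]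
        exact subset_rfl
      have h1 : A p ≤ ∑' i : ℤ × (Fin n → ℤ),
          {q : ℤ × (Fin n → ℤ) | dyadicCube q.1 q.2 ⊆ dyadicCube p.1 p.2}.indicator A i := by
        rw [← Set.indicator_of_mem hmem A]
        exact ENNReal.le_tsum p
      exact le_antisymm (h1.trans h) zero_le
    have : ∀ p : ℤ × (Fin n → ℤ),
        A p * ((∫⁻ x in dyadicCube p.1 p.2, g x ∂μw) / μw (dyadicCube p.1 p.2)) ^ 2 = 0 := by
      intro p
      rw [hA0 p, zero_mul]
    rw [tsum_congr this, tsum_zero]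
    exact zero_le
  rcases eq_or_ne (∫⁻ x, g x ^ 2 ∂μw) 0 with hG0 | hG0
  · have hae : g =ᵐ[μw] 0 := by
      have h2 := (lintegral_eq_zero_iff (hg.pow_const 2)).mp hG0
      filter_upwards [h2] with x hx
      simp only [Pi.zero_apply] at hx ⊢
      exact (pow_eq_zero_iff two_ne_zero).mp hx
    have hgz : ∀ p : ℤ × (Fin n → ℤ), (∫⁻ x in dyadicCube p.1 p.2, g x ∂μw) = 0 := by
      intro p
      rw [lintegral_eq_zero_iff hg]
      exact ae_restrict_of_ae hae
    have : ∀ p : ℤ × (Fin n → ℤ),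
        A p * ((∫⁻ x in dyadicCube p.1 p.2, g x ∂μw) / μw (dyadicCube p.1 p.2)) ^ 2 = 0 := by
      intro p
      rw [hgz p, ENNReal.zero_div]
      simp
    rw [tsum_congr this, tsum_zero]
    exact zero_le
  rcases eq_or_ne (∫⁻ x, g x ^ 2 ∂μw) ⊤ with hGtop | hGtop
  · rw [hGtop, ENNReal.mul_top (by
      intro h
      rcases mul_eq_zero.mp h with h4 | hK0
      · norm_num at h4
      · exact hK hK0)]
    exact le_top
  · rw [ENNReal.tsum_eq_iSup_sum]
    apply iSup_le
    intro F
    exact CarlesonAux.core_bound μw g hg A K hCar' hGtop F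
end
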